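/- Let r ≥ 1 be an integer. For every real number b > 0 there exist a unique real number a with a ≠ b and a unique tuple (λ_1,…,λ_{r−1}) ∈ ℝ^{r−1} such that the polynomial p = X^{r+1} + Σ_{m=1}^{r−1} λ_m X^m satisfies p^{(l)}(a) = 0 for every 1 ≤ l ≤ r−1 and p(a) = p(b); moreover this unique a equals −b/r. -/
import Mathlib

open Polynomial

open Polynomial

noncomputable def qp (r : ℕ) (a : ℝ) : ℝ[X] :=
  (X - C a) ^ r * (X + C (r * a)) + C (-((-a) ^ r * (r * a)))

lemma qp_eval (r : ℕ) (a x : ℝ) :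
    (qp r a).eval x = (x - a) ^ r * (x + r * a) - (-a) ^ r * (r * a) := by
  simp [qp]; ring

lemma qp_natDegree_le (r : ℕ) (a : ℝ) : (qp r a).natDegree ≤ r + 1 := by
  refine (natDegree_add_le _ _).trans (max_le ?_ (by simp only [natDegree_C]; omega))
  refine (natDegree_mul_le).trans ?_
  have h1 : ((X - C a) ^ r).natDegree ≤ r := by
    simpa using natDegree_pow_le (p := X - C a) (n := r)
  have h2 : (X + C ((r : ℝ) * a)).natDegree ≤ 1 := (natDegree_X_add_C _).le
  omega

lemma qp_alt (r : ℕ) (a : ℝ) :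
    qp r a = (X + C (-a)) ^ r * X + (X + C (-a)) ^ r * C (r * a)
      + C (-((-a) ^ r * (r * a))) := by
  simp only [qp, C_neg, ← sub_eq_add_neg]; ring

lemma qp_coeff_top (r : ℕ) (a : ℝ) : (qp r a).coeff (r + 1) = 1 := by
  rw [qp_alt, coeff_add, coeff_add, coeff_mul_X, coeff_mul_C,
    coeff_X_add_C_pow, coeff_X_add_C_pow, coeff_C]
  simp [Nat.choose_eq_zero_of_lt (Nat.lt_succ_self r)]

lemma qp_coeff_r (r : ℕ) (hr : 1 ≤ r) (a : ℝ) : (qp r a).coeff r = 0 := by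
  obtain ⟨s, rfl⟩ : ∃ s, r = s + 1 := ⟨r - 1, by omega⟩
  rw [qp_alt, coeff_add, coeff_add, coeff_mul_X, coeff_mul_C,
    coeff_X_add_C_pow, coeff_X_add_C_pow, coeff_C]
  have h1 : s + 1 - s = 1 := by omega
  rw [h1, Nat.sub_self, Nat.choose_succ_self_right, Nat.choose_self]
  push_cast
  simp
  ring

lemma qp_coeff_zero (r : ℕ) (a : ℝ) : (qp r a).coeff 0 = 0 := by
  rw [qp_alt, coeff_add, coeff_add, mul_coeff_zero, coeff_mul_C,
    coeff_X_add_C_pow, coeff_X_zero, coeff_C]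
  simp

lemma iter_deriv_add (l : ℕ) (p q : ℝ[X]) :
    derivative^[l] (p + q) = derivative^[l] p + derivative^[l] q := by
  induction l with
  | zero => simp
  | succ n ih => simp [Function.iterate_succ_apply', ih]

lemma iter_deriv_sub (l : ℕ) (p q : ℝ[X]) :
    derivative^[l] (p - q) = derivative^[l] p - derivative^[l] q := by
  induction l with
  | zero => simp
  | succ n ih => simp [Function.iterate_succ_apply', ih]

lemma qp_deriv (r : ℕ) (a : ℝ) {l : ℕ} (h1 : 1 ≤ l) (h2 : l ≤ r - 1) :
    (derivative^[l] (qp r a)).eval a = 0 := by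
  have hne : (X - C a) ^ r * (X + C ((r : ℝ) * a)) ≠ 0 :=
    mul_ne_zero (pow_ne_zero _ (X_sub_C_ne_zero a)) (X_add_C_ne_zero _)
  have hmult : r ≤ rootMultiplicity a ((X - C a) ^ r * (X + C ((r : ℝ) * a))) :=
    (le_rootMultiplicity_iff hne).2 (dvd_mul_right _ _)
  have hroot := isRoot_iterate_derivative_of_lt_rootMultiplicity
    (p := (X - C a) ^ r * (X + C ((r : ℝ) * a))) (t := a) (n := l) (by omega)
  rw [qp, iter_deriv_add, iterate_derivative_C (by omega), add_zero]
  exact hroot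


lemma sum_coeff (r : ℕ) (f : Fin (r - 1) → ℝ) (n : ℕ) :
    (∑ m : Fin (r - 1), C (f m) * X ^ ((m : ℕ) + 1)).coeff n =
      if h : 1 ≤ n ∧ n - 1 < r - 1 then f ⟨n - 1, h.2⟩ else 0 := by
  rw [finset_sum_coeff]
  simp only [coeff_C_mul, coeff_X_pow, mul_ite, mul_one, mul_zero]
  split_ifs with h
  · rw [Finset.sum_eq_single (⟨n - 1, h.2⟩ : Fin (r - 1))]
    · rw [if_pos (by simp; omega)]
    · intro m _ hm
      rw [if_neg]
      intro hc
      exact hm (Fin.ext (by simp; omega))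
    · intro hmem; exact absurd (Finset.mem_univ _) hmem
  · refine Finset.sum_eq_zero fun m _ => ?_
    rw [if_neg]
    have := m.isLt
    omega

lemma canon_coeff (r : ℕ) (f : Fin (r - 1) → ℝ) (n : ℕ) :
    (X ^ (r + 1) + ∑ m : Fin (r - 1), C (f m) * X ^ ((m : ℕ) + 1)).coeff n =
      (if n = r + 1 then 1 else 0) +
        if h : 1 ≤ n ∧ n - 1 < r - 1 then f ⟨n - 1, h.2⟩ else 0 := by
  rw [coeff_add, coeff_X_pow, sum_coeff]

lemma eq_canon (r : ℕ) (hr : 1 ≤ r) (q : ℝ[X]) (hd : q.natDegree ≤ r + 1)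
    (h1 : q.coeff (r + 1) = 1) (h2 : q.coeff r = 0) (h3 : q.coeff 0 = 0) :
    q = X ^ (r + 1) + ∑ m : Fin (r - 1), C (q.coeff ((m : ℕ) + 1)) * X ^ ((m : ℕ) + 1) := by
  ext n
  rw [canon_coeff]
  split_ifs with ha hb hb
  · omega
  · rw [ha, h1]; norm_num
  · have hn : n - 1 + 1 = n := by omega
    rw [hn, zero_add]
  · rw [add_zero]
    have : n = 0 ∨ n = r ∨ r + 1 < n := by omega
    rcases this with h | h | h
    · rw [h, h3]
    · rw [h, h2]
    · exact coeff_eq_zero_of_natDegree_lt (hd.trans_lt h)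

/-- For every `b > 0` there is a unique `a ≠ b` together with a unique tuple
`(λ_1,…,λ_{r-1})` such that `p = X^{r+1} + ∑_{m=1}^{r-1} λ_m X^m` satisfies
`p^{(l)}(a) = 0` for every `1 ≤ l ≤ r-1` and `p(a) = p(b)`; moreover this unique
`a` equals `-b/r`. -/
theorem stmt14 (r : ℕ) (hr : 1 ≤ r) (b : ℝ) (hb : 0 < b) :
    (∃! al : ℝ × (Fin (r - 1) → ℝ),
      al.1 ≠ b ∧
      (∀ l : ℕ, 1 ≤ l → l ≤ r - 1 →
        (derivative^[l]
          (X ^ (r + 1) + ∑ m : Fin (r - 1), C (al.2 m) * X ^ ((m : ℕ) + 1))).eval al.1 = 0) ∧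
      (X ^ (r + 1) + ∑ m : Fin (r - 1), C (al.2 m) * X ^ ((m : ℕ) + 1)).eval al.1 =
        (X ^ (r + 1) + ∑ m : Fin (r - 1), C (al.2 m) * X ^ ((m : ℕ) + 1)).eval b) ∧
    (∀ al : ℝ × (Fin (r - 1) → ℝ),
      (al.1 ≠ b ∧
        (∀ l : ℕ, 1 ≤ l → l ≤ r - 1 →
          (derivative^[l]
            (X ^ (r + 1) + ∑ m : Fin (r - 1), C (al.2 m) * X ^ ((m : ℕ) + 1))).eval al.1 = 0) ∧
        (X ^ (r + 1) + ∑ m : Fin (r - 1), C (al.2 m) * X ^ ((m : ℕ) + 1)).eval al.1 =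
          (X ^ (r + 1) + ∑ m : Fin (r - 1), C (al.2 m) * X ^ ((m : ℕ) + 1)).eval b) →
      al.1 = -b / r) := by
  have hrR : (0 : ℝ) < r := by exact_mod_cast hr
  set a₀ : ℝ := -b / r with ha₀
  set f₀ : Fin (r - 1) → ℝ := fun m => (qp r a₀).coeff ((m : ℕ) + 1) with hf₀
  have hq : ∀ a : ℝ,
      qp r a = X ^ (r + 1) + ∑ m : Fin (r - 1), C ((qp r a).coeff ((m : ℕ) + 1)) * X ^ ((m : ℕ) + 1) :=
    fun a => eq_canon r hr _ (qp_natDegree_le r a) (qp_coeff_top r a)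
      (qp_coeff_r r hr a) (qp_coeff_zero r a)
  -- main uniqueness lemma
  have main : ∀ a : ℝ, ∀ f : Fin (r - 1) → ℝ, a ≠ b →
      (∀ l : ℕ, 1 ≤ l → l ≤ r - 1 →
        (derivative^[l]
          (X ^ (r + 1) + ∑ m : Fin (r - 1), C (f m) * X ^ ((m : ℕ) + 1))).eval a = 0) →
      ((X ^ (r + 1) + ∑ m : Fin (r - 1), C (f m) * X ^ ((m : ℕ) + 1)).eval a =
        (X ^ (r + 1) + ∑ m : Fin (r - 1), C (f m) * X ^ ((m : ℕ) + 1)).eval b) →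
      a = a₀ ∧ f = f₀ := by
    intro a f hab hder heval
    set p : ℝ[X] := X ^ (r + 1) + ∑ m : Fin (r - 1), C (f m) * X ^ ((m : ℕ) + 1) with hp
    set d : ℝ[X] := p - qp r a with hd
    have hdcoeff : ∀ N, r - 1 < N → d.coeff N = 0 := by
      intro N hN
      rw [hd, coeff_sub, hp, canon_coeff]
      have hcases : N = r ∨ N = r + 1 ∨ r + 1 < N := by omega
      rcases hcases with h | h | h
      · rw [h, qp_coeff_r r hr a, if_neg (by omega), dif_neg (by omega)]
        norm_num
      · rw [h, qp_coeff_top, if_pos rfl, dif_neg (by omega)]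
        norm_num
      · rw [coeff_eq_zero_of_natDegree_lt ((qp_natDegree_le r a).trans_lt h),
          if_neg (by omega), dif_neg (by omega)]
        norm_num
    have hdeg : d.natDegree ≤ r - 1 := natDegree_le_iff_coeff_eq_zero.2 hdcoeff
    have hdevals : ∀ l, 1 ≤ l → l ≤ r - 1 → (derivative^[l] d).eval a = 0 := by
      intro l h1 h2
      rw [hd, iter_deriv_sub, eval_sub, hder l h1 h2, qp_deriv r a h1 h2, sub_zero]
    have key : ∀ i, i ≤ r - 1 → derivative^[r - i] d = 0 := by
      intro i
      induction i with
      | zero => exact fun _ => iterate_derivative_eq_zero (by omega)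
      | succ i ih =>
        intro hi
        have h0 := ih (by omega)
        have hd1 : derivative (derivative^[r - (i + 1)] d) = 0 := by
          have he : r - i = r - (i + 1) + 1 := by omega
          rw [he, Function.iterate_succ_apply'] at h0
          exact h0
        have hc := eq_C_of_derivative_eq_zero hd1
        have hval := hdevals (r - (i + 1)) (by omega) (by omega)
        rw [hc, eval_C] at hval
        rw [hc, hval, map_zero]
    have hder0 : derivative d = 0 := by
      have h1 := key (r - 1) le_rfl
      have h2 : r - (r - 1) = 1 := by omega
      rw [h2] at h1
      simpa using h1
    have hdC := eq_C_of_derivative_eq_zero hder0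
    have hc0 : d.coeff 0 = 0 := by
      rw [hd, coeff_sub, hp, canon_coeff, qp_coeff_zero, if_neg (by omega), dif_neg (by omega)]
      norm_num
    have hd00 : d = 0 := by rw [hdC, hc0, map_zero]
    have hpq : p = qp r a := by
      have := sub_eq_zero.1 (hd ▸ hd00)
      exact this
    -- now evaluate
    rw [hpq, qp_eval, qp_eval, sub_self, zero_pow (by omega), zero_mul] at heval
    have hmul : (b - a) ^ r * (b + r * a) = 0 := by linarith
    have hba : (b - a) ≠ 0 := sub_ne_zero.2 (Ne.symm hab)
    have hba' : b + r * a = 0 := by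
      rcases mul_eq_zero.1 hmul with h | h
      · exact absurd h (pow_ne_zero _ hba)
      · exact h
    have haa : a = a₀ := by
      rw [ha₀]
      field_simp
      linarith
    refine ⟨haa, funext fun m => ?_⟩
    have hcm := canon_coeff r f ((m : ℕ) + 1)
    rw [← hp, hpq, haa] at hcm
    show f m = (qp r a₀).coeff ((m : ℕ) + 1)
    rw [if_neg (by have := m.isLt; omega), dif_pos ⟨by omega, by have := m.isLt; omega⟩,
      zero_add] at hcm
    rw [hcm]
    congr 1

  constructor
  · refine ⟨⟨a₀, f₀⟩, ⟨?_, ?_, ?_⟩, ?_⟩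
    · show a₀ ≠ b
      have : a₀ < 0 := div_neg_of_neg_of_pos (neg_lt_zero.2 hb) hrR
      exact (this.trans hb).ne
    · intro l h1 h2
      show (derivative^[l]
        (X ^ (r + 1) + ∑ m : Fin (r - 1), C (f₀ m) * X ^ ((m : ℕ) + 1))).eval a₀ = 0
      rw [← hq a₀]
      exact qp_deriv r a₀ h1 h2
    · show (X ^ (r + 1) + ∑ m : Fin (r - 1), C (f₀ m) * X ^ ((m : ℕ) + 1)).eval a₀ =
        (X ^ (r + 1) + ∑ m : Fin (r - 1), C (f₀ m) * X ^ ((m : ℕ) + 1)).eval b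
      rw [← hq a₀, qp_eval, qp_eval, sub_self, zero_pow (by omega), zero_mul]
      have h0 : b + r * a₀ = 0 := by
        rw [ha₀]
        field_simp
        ring
      rw [h0, mul_zero]
    · rintro ⟨a, f⟩ ⟨hab, hder, heval⟩
      have := main a f hab hder heval
      exact Prod.ext this.1 this.2
  · rintro ⟨a, f⟩ ⟨hab, hder, heval⟩
    exact (main a f hab hder heval).1
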